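/- arXiv:1403.5282 — 5 statements merged into one kernel-verified Lean document; each statement's English description precedes it below -/
import Mathlib

section
/- Let B be a non-degenerate idempotent algebra and ω a faithful linear functional on B (i.e. ω(dB) ≠ 0 and ω(Bd) ≠ 0 whenever d ≠ 0). If B·ω = ω·B as subsets of the dual space (where (b·ω)(c) = ω(cb) and (ω·b)(c) = ω(bc)), then there exists a unique algebra automorphism σ of B such that ω(ab) = ω(b σ(a)) for all a, b ∈ B, and σ is characterized by σ(b)·ω = ω·b for all b ∈ B. -/
/-- A faithful functional on a non-degenerate idempotent algebra with `B·ω = ω·B`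
admits a unique modular automorphism. -/
theorem stmt_0 (k : Type*) [Field k] (B : Type*) [NonUnitalRing B] [Module k B]
    [SMulCommClass k B B] [IsScalarTower k B B]
    (hndl : ∀ a : B, (∀ b : B, a * b = 0) → a = 0)
    (hndr : ∀ a : B, (∀ b : B, b * a = 0) → a = 0)
    (hidem : ∀ a : B, a ∈ Submodule.span k {x : B | ∃ b c : B, x = b * c})
    (ω : B →ₗ[k] k)
    (hfaithl : ∀ d : B, d ≠ 0 → ∃ b, ω (d * b) ≠ 0)
    (hfaithr : ∀ d : B, d ≠ 0 → ∃ b, ω (b * d) ≠ 0)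
    (hBω : {f : B →ₗ[k] k | ∃ b : B, f = ω ∘ₗ LinearMap.mulRight k b}
         = {f : B →ₗ[k] k | ∃ b : B, f = ω ∘ₗ LinearMap.mulLeft k b}) :
    ∃! σ : B ≃ₗ[k] B, (∀ a b : B, σ (a * b) = σ a * σ b)
      ∧ (∀ a b : B, ω (a * b) = ω (b * σ a))
      ∧ (∀ a c : B, ω (c * σ a) = ω (a * c)) := by
  classical
  have injr : ∀ c c' : B, (∀ x, ω (x * c) = ω (x * c')) → c = c' := by
    intro c c' h
    by_contra hne
    obtain ⟨b, hb⟩ := hfaithr (c - c') (sub_ne_zero.mpr hne)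
    exact hb (by rw [mul_sub, map_sub, h b, sub_self])
  have injl : ∀ c c' : B, (∀ x, ω (c * x) = ω (c' * x)) → c = c' := by
    intro c c' h
    by_contra hne
    obtain ⟨b, hb⟩ := hfaithl (c - c') (sub_ne_zero.mpr hne)
    exact hb (by rw [sub_mul, map_sub, h b, sub_self])
  have key : ∀ a : B, ∃ c : B, ∀ x, ω (x * c) = ω (a * x) := by
    intro a
    have hmem : (ω ∘ₗ LinearMap.mulLeft k a)
        ∈ {f : B →ₗ[k] k | ∃ b : B, f = ω ∘ₗ LinearMap.mulRight k b} := by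
      rw [hBω]; exact ⟨a, rfl⟩
    obtain ⟨c, hc⟩ := hmem
    exact ⟨c, fun x => by
      have := LinearMap.ext_iff.mp hc x
      simpa using this.symm⟩
  have key' : ∀ b : B, ∃ c : B, ∀ x, ω (c * x) = ω (x * b) := by
    intro b
    have hmem : (ω ∘ₗ LinearMap.mulRight k b)
        ∈ {f : B →ₗ[k] k | ∃ a : B, f = ω ∘ₗ LinearMap.mulLeft k a} := by
      rw [← hBω]; exact ⟨b, rfl⟩
    obtain ⟨c, hc⟩ := hmem
    exact ⟨c, fun x => by
      have := LinearMap.ext_iff.mp hc x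
      simpa using this.symm⟩
  let s : B → B := fun a => (key a).choose
  have hs : ∀ a x, ω (x * s a) = ω (a * x) := fun a => (key a).choose_spec
  let t : B → B := fun b => (key' b).choose
  have ht : ∀ b x, ω (t b * x) = ω (x * b) := fun b => (key' b).choose_spec
  have hst : ∀ b, s (t b) = b := fun b => injr _ _ fun x => by rw [hs, ht]
  have hts : ∀ b, t (s b) = b := fun b => injl _ _ fun x => by rw [ht, hs]
  have hadd : ∀ a a', s (a + a') = s a + s a' := fun a a' => injr _ _ fun x => by
    rw [hs, add_mul, mul_add, map_add, map_add, hs, hs]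
  have hsmul : ∀ (r : k) (a : B), s (r • a) = r • s a := fun r a => injr _ _ fun x => by
    rw [hs, smul_mul_assoc, mul_smul_comm, map_smul, map_smul, hs]
  let σ : B ≃ₗ[k] B :=
    { toFun := s, invFun := t, left_inv := hts, right_inv := hst,
      map_add' := hadd, map_smul' := hsmul }
  have hσ : ∀ a, σ a = s a := fun _ => rfl
  have hmul : ∀ a b, s (a * b) = s a * s b := fun a b => injr _ _ fun x =>
    calc ω (x * s (a * b)) = ω (a * b * x) := hs _ _
      _ = ω (a * (b * x)) := by rw [mul_assoc]
      _ = ω ((b * x) * s a) := (hs _ _).symm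
      _ = ω (b * (x * s a)) := by rw [mul_assoc]
      _ = ω ((x * s a) * s b) := (hs _ _).symm
      _ = ω (x * (s a * s b)) := by rw [mul_assoc]
  refine ⟨σ, ⟨fun a b => by rw [hσ, hσ, hσ, hmul],
    fun a b => by rw [hσ, hs], fun a c => by rw [hσ, hs]⟩, ?_⟩
  intro σ' ⟨_, _, h3⟩
  apply LinearEquiv.toLinearMap_injective
  apply LinearMap.ext
  intro b
  exact injr _ _ fun x => (h3 b x).trans (hs b x).symm
end

section
/- Let H be a Hopf algebra with antipode S and let φ be a left integral in the sense that (id ⊗ φ)(Δ(a)) = φ(a)·1 for all a ∈ H. Then the strong left invariance identity Σ S(a₍₁₎) φ(a₍₂₎ b) = Σ b₍₁₎ φ(a b₍₂₎) holds for all a, b ∈ H. -/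
open TensorProduct

section Aux

variable {k H : Type*} [CommRing k] [Ring H] [HopfAlgebra k H] (φ : H →ₗ[k] k)

/-- `P (x ⊗ y) = φ(y) • x` packaged as `μ ∘ (id ⊗ ηφ)`. -/
noncomputable def auxP : H ⊗[k] H →ₗ[k] H :=
  LinearMap.mul' k H ∘ₗ LinearMap.lTensor H ((Algebra.linearMap k H) ∘ₗ φ)

lemma auxP_tmul (x y : H) : auxP φ (x ⊗ₜ y) = x * (algebraMap k H (φ y)) := rfl

lemma auxP_eq_rid (t : H ⊗[k] H) :
    auxP φ t = (TensorProduct.rid k H) (LinearMap.lTensor H φ t) := by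
  induction t using TensorProduct.induction_on with
  | zero => simp
  | tmul x y => simp [auxP_tmul, Algebra.smul_def, Algebra.commutes]
  | add s t hs ht => simp_all [map_add]

lemma auxP_one_mul (u : H) (t : H ⊗[k] H) :
    auxP φ ((u ⊗ₜ (1 : H)) * t) = u * auxP φ t := by
  induction t using TensorProduct.induction_on with
  | zero => simp
  | tmul x y => simp [auxP_tmul, Algebra.TensorProduct.tmul_mul_tmul, mul_assoc]
  | add s t hs ht => simp_all [mul_add]

/-- `Γ (u ⊗ (x ⊗ y)) = (u*x) ⊗ y`. -/
noncomputable def auxΓ : H ⊗[k] (H ⊗[k] H) →ₗ[k] H ⊗[k] H :=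
  LinearMap.rTensor H (LinearMap.mul' k H) ∘ₗ (TensorProduct.assoc k H H H).symm.toLinearMap

lemma auxΓ_tmul (u : H) (t : H ⊗[k] H) :
    auxΓ (k := k) (u ⊗ₜ t) = (u ⊗ₜ (1 : H)) * t := by
  induction t using TensorProduct.induction_on with
  | zero => rw [tmul_zero, map_zero, mul_zero]
  | tmul x y => simp [auxΓ, Algebra.TensorProduct.tmul_mul_tmul]
  | add s t hs ht =>
      rw [tmul_add, map_add, hs, ht, mul_add]

end Aux

/-- Strong left invariance for a left integral `φ` on a Hopf algebra:
`Σ S(a₍₁₎) φ(a₍₂₎ b) = Σ b₍₁₎ φ(a b₍₂₎)`. -/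
theorem stmt_5 (k H : Type*) [CommRing k] [Ring H] [HopfAlgebra k H]
    (φ : H →ₗ[k] k)
    (hφ : ∀ a : H,
      (TensorProduct.rid k H) (LinearMap.lTensor H φ (Coalgebra.comul a)) = φ a • (1 : H)) :
    ∀ a b : H,
      (LinearMap.mul' k H)
        ((TensorProduct.map (HopfAlgebra.antipode (R := k))
            ((Algebra.linearMap k H) ∘ₗ φ ∘ₗ LinearMap.mulRight k b))
          (Coalgebra.comul a))
      = (LinearMap.mul' k H)
        ((TensorProduct.map LinearMap.id
            ((Algebra.linearMap k H) ∘ₗ φ ∘ₗ LinearMap.mulLeft k a))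
          (Coalgebra.comul b)) := by
  intro a b
  set S : H →ₗ[k] H := HopfAlgebra.antipode (R := k) with hS
  set D : H ⊗[k] H := Coalgebra.comul b with hD
  -- invariance, pointwise with `auxP`
  have hK : ∀ c : H, auxP φ (Coalgebra.comul c) = φ c • (1 : H) := fun c => by
    rw [auxP_eq_rid]; exact hφ c
  -- the RHS equals `P ((1 ⊗ a) * comul b)`
  have hR : ∀ t : H ⊗[k] H,
      (LinearMap.mul' k H)
        ((TensorProduct.map LinearMap.id
            ((Algebra.linearMap k H) ∘ₗ φ ∘ₗ LinearMap.mulLeft k a)) t)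
      = auxP φ (((1 : H) ⊗ₜ a) * t) := by
    intro t
    induction t using TensorProduct.induction_on with
    | zero => simp
    | tmul x y =>
        simp [auxP_tmul, Algebra.TensorProduct.tmul_mul_tmul]
    | add s t hs ht => simp_all [mul_add]
  -- the LHS equals `P (Γ (rTensor S (lTensor comul (comul a))) * comul b)`
  have hL : ∀ t : H ⊗[k] H,
      (LinearMap.mul' k H)
        ((TensorProduct.map S
            ((Algebra.linearMap k H) ∘ₗ φ ∘ₗ LinearMap.mulRight k b)) t)
      = auxP φ (auxΓ (k := k)
          (LinearMap.rTensor (H ⊗[k] H) S (LinearMap.lTensor H Coalgebra.comul t)) * D) := by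
    intro t
    induction t using TensorProduct.induction_on with
    | zero => simp
    | tmul x y =>
        have : auxΓ (k := k)
            (LinearMap.rTensor (H ⊗[k] H) S (LinearMap.lTensor H Coalgebra.comul (x ⊗ₜ y)))
            = (S x ⊗ₜ (1 : H)) * Coalgebra.comul y := by
          simp [auxΓ_tmul]
        rw [this, mul_assoc, hD, ← Bialgebra.comul_mul, auxP_one_mul, hK]
        simp [auxP_tmul, Algebra.smul_def, Algebra.commutes, mul_smul_comm]
    | add s t hs ht => simp_all [add_mul]
  -- key cancellation: `Γ (rTensor S (lTensor comul (comul a))) = 1 ⊗ a`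
  have h2 : ∀ s : (H ⊗[k] H) ⊗[k] H,
      auxΓ (k := k) (LinearMap.rTensor (H ⊗[k] H) S (TensorProduct.assoc k H H H s))
      = LinearMap.rTensor H (LinearMap.mul' k H ∘ₗ LinearMap.rTensor H S) s := by
    intro s
    induction s using TensorProduct.induction_on with
    | zero => simp
    | tmul t z =>
        induction t using TensorProduct.induction_on with
        | zero => simp
        | tmul x y => simp [auxΓ_tmul, Algebra.TensorProduct.tmul_mul_tmul]
        | add s t hs ht => simp_all [add_tmul]
    | add s t hs ht => simp_all
  have hkey : auxΓ (k := k)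
      (LinearMap.rTensor (H ⊗[k] H) S (LinearMap.lTensor H Coalgebra.comul (Coalgebra.comul a)))
      = (1 : H) ⊗ₜ a := by
    rw [← Coalgebra.coassoc_apply, h2]
    have h3 : (LinearMap.rTensor H (LinearMap.mul' k H ∘ₗ LinearMap.rTensor H S))
          (LinearMap.rTensor H Coalgebra.comul (Coalgebra.comul a))
        = LinearMap.rTensor H
            (LinearMap.mul' k H ∘ₗ LinearMap.rTensor H S ∘ₗ Coalgebra.comul)
            (Coalgebra.comul a) := by
      rw [← LinearMap.comp_apply, ← LinearMap.rTensor_comp]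
      rfl
    rw [h3, hS, HopfAlgebra.mul_antipode_rTensor_comul,
      LinearMap.rTensor_comp, LinearMap.comp_apply, Coalgebra.rTensor_counit_comul]
    simp
  rw [hL, hR, hkey]
end

section
/- Let H be a Hopf algebra with antipode S and let ψ be a right integral, i.e. (ψ ⊗ id)(Δ(a)) = ψ(a)·1 for all a ∈ H. Then the strong right invariance identity Σ ψ(b a₍₁₎) S(a₍₂₎) = Σ ψ(b₍₁₎ a) b₍₂₎ holds for all a, b ∈ H. -/
open TensorProduct
open Coalgebra

/-- Strong right invariance for a right integral `ψ` on a Hopf algebra: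
`Σ ψ(b a₍₁₎) S(a₍₂₎) = Σ ψ(b₍₁₎ a) b₍₂₎`. -/
theorem stmt_6 (k H : Type*) [CommRing k] [Ring H] [HopfAlgebra k H]
    (ψ : H →ₗ[k] k)
    (hψ : ∀ a : H,
      (TensorProduct.lid k H) (ψ.rTensor H (Coalgebra.comul a)) = ψ a • (1 : H)) :
    ∀ a b : H,
      (LinearMap.mul' k H)
        ((TensorProduct.map ((Algebra.linearMap k H) ∘ₗ ψ ∘ₗ LinearMap.mulLeft k b)
            (HopfAlgebra.antipode (R := k)))
          (Coalgebra.comul a))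
      = (LinearMap.mul' k H)
        ((TensorProduct.map ((Algebra.linearMap k H) ∘ₗ ψ ∘ₗ LinearMap.mulRight k a)
            LinearMap.id)
          (Coalgebra.comul b)) := by
  intro a b
  classical
  set S : H →ₗ[k] H := HopfAlgebra.antipode (R := k) with hS
  set ra := Coalgebra.Repr.arbitrary k a with hra
  set rb := Coalgebra.Repr.arbitrary k b with hrb
  -- the right-integral property, in terms of representations of `comul b` and `comul x`
  have key : ∀ (x : H),
      (ψ (b * x)) • (1 : H) = ∑ j ∈ rb.index, ∑ m ∈ (ℛ k x).index,
        ψ (rb.left j * (ℛ k x).left m) • (rb.right j * (ℛ k x).right m) := by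
    intro x
    have hmm : Coalgebra.comul (R := k) (b * x)
        = ∑ j ∈ rb.index, ∑ m ∈ (ℛ k x).index,
            (rb.left j * (ℛ k x).left m) ⊗ₜ[k] (rb.right j * (ℛ k x).right m) := by
      rw [Bialgebra.comul_mul, ← rb.eq, ← (ℛ k x).eq, Finset.sum_mul_sum]
      exact Finset.sum_congr rfl fun j _ => Finset.sum_congr rfl fun m _ =>
        Algebra.TensorProduct.tmul_mul_tmul _ _ _ _
    have h := hψ (b * x)
    rw [hmm] at h
    simp only [map_sum, LinearMap.rTensor_tmul, TensorProduct.lid_tmul] at h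
    exact h.symm
  -- the auxiliary linear map `P x = Σ ψ(b₁ x) b₂`
  set P : H →ₗ[k] H := (TensorProduct.lid k H).toLinearMap ∘ₗ ψ.rTensor H ∘ₗ
      LinearMap.mulLeft k (Coalgebra.comul (R := k) b) ∘ₗ (TensorProduct.mk k H H).flip 1
      with hPdef
  have hP : ∀ x : H, P x = ∑ j ∈ rb.index, ψ (rb.left j * x) • rb.right j := by
    intro x
    have hmm : Coalgebra.comul (R := k) b * (x ⊗ₜ[k] (1 : H))
        = ∑ j ∈ rb.index, (rb.left j * x) ⊗ₜ[k] rb.right j := by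
      rw [← rb.eq, Finset.sum_mul]
      exact Finset.sum_congr rfl fun j _ => by
        rw [Algebra.TensorProduct.tmul_mul_tmul, mul_one]
    show (TensorProduct.lid k H) (ψ.rTensor H (Coalgebra.comul (R := k) b * (x ⊗ₜ[k] 1))) = _
    rw [hmm]
    simp only [map_sum, LinearMap.rTensor_tmul, TensorProduct.lid_tmul]
  -- the trilinear map `T (x ⊗ y ⊗ z) = Σ ψ(b₁ x) b₂ (y S(z))`
  set T : H ⊗[k] (H ⊗[k] H) →ₗ[k] H :=
      LinearMap.mul' k H ∘ₗ TensorProduct.map P (LinearMap.mul' k H ∘ₗ S.lTensor H) with hTdef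
  have hT : ∀ x y z : H, T (x ⊗ₜ (y ⊗ₜ z))
      = ∑ j ∈ rb.index, ψ (rb.left j * x) • (rb.right j * (y * S z)) := by
    intro x y z
    show LinearMap.mul' k H (TensorProduct.map P (LinearMap.mul' k H ∘ₗ S.lTensor H)
      (x ⊗ₜ (y ⊗ₜ z))) = _
    simp only [TensorProduct.map_tmul, LinearMap.coe_comp, Function.comp_apply,
      LinearMap.lTensor_tmul, LinearMap.mul'_apply, hP, Finset.sum_mul, smul_mul_assoc]
  -- counit identity `Σ ε(a₂) a₁ = a`
  have hεa : ∑ i ∈ ra.index, Coalgebra.counit (R := k) (ra.right i) • ra.left i = a := by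
    have h := congrArg (TensorProduct.rid k H) (Coalgebra.sum_tmul_counit_eq ra)
    simpa only [map_sum, TensorProduct.rid_tmul, one_smul] using h
  -- rewrite the goal as sums
  rw [← ra.eq, ← rb.eq]
  simp only [map_sum, TensorProduct.map_tmul, LinearMap.mul'_apply, LinearMap.coe_comp,
    Function.comp_apply, LinearMap.mulLeft_apply, LinearMap.mulRight_apply, LinearMap.id_coe,
    id_eq, Algebra.linearMap_apply, ← Algebra.smul_def]
  calc
    ∑ i ∈ ra.index, ψ (b * ra.left i) • S (ra.right i)
        = ∑ i ∈ ra.index, (ψ (b * ra.left i) • (1 : H)) * S (ra.right i) := by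
          simp only [smul_mul_assoc, one_mul]
    _ = ∑ i ∈ ra.index, ∑ m ∈ (ℛ k (ra.left i)).index,
          T ((ℛ k (ra.left i)).left m ⊗ₜ ((ℛ k (ra.left i)).right m ⊗ₜ ra.right i)) := by
        refine Finset.sum_congr rfl fun i _ => ?_
        rw [key (ra.left i), Finset.sum_comm, Finset.sum_mul]
        refine Finset.sum_congr rfl fun m _ => ?_
        rw [hT, Finset.sum_mul]
        exact Finset.sum_congr rfl fun j _ => by rw [smul_mul_assoc, mul_assoc]
    _ = ∑ i ∈ ra.index, ∑ m ∈ (ℛ k (ra.right i)).index,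
          T (ra.left i ⊗ₜ ((ℛ k (ra.right i)).left m ⊗ₜ (ℛ k (ra.right i)).right m)) := by
        have h := congrArg T (Coalgebra.sum_tmul_tmul_eq ra
          (fun i => ℛ k (ra.left i)) (fun i => ℛ k (ra.right i)))
        simpa only [map_sum] using h
    _ = ∑ i ∈ ra.index, ∑ j ∈ rb.index,
          ψ (rb.left j * ra.left i) •
            (rb.right j * (Coalgebra.counit (R := k) (ra.right i) • (1 : H))) := by
        refine Finset.sum_congr rfl fun i _ => ?_
        simp only [hT]
        rw [Finset.sum_comm]
        refine Finset.sum_congr rfl fun j _ => ?_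
        rw [← HopfAlgebra.sum_mul_antipode_eq_smul (ℛ k (ra.right i)), Finset.mul_sum,
          Finset.smul_sum]
    _ = ∑ j ∈ rb.index, ψ (rb.left j * a) • rb.right j := by
        rw [Finset.sum_comm]
        refine Finset.sum_congr rfl fun j _ => ?_
        have : ∀ i ∈ ra.index, ψ (rb.left j * ra.left i) •
            (rb.right j * (Coalgebra.counit (R := k) (ra.right i) • (1 : H)))
            = ψ (rb.left j * (Coalgebra.counit (R := k) (ra.right i) • ra.left i)) •
              rb.right j := by
          intro i _
          rw [mul_smul_comm, mul_one, mul_smul_comm, map_smul, smul_comm, ← smul_assoc,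
            smul_eq_mul, mul_comm, ← smul_eq_mul, smul_assoc]
        rw [Finset.sum_congr rfl this, ← Finset.sum_smul, ← map_sum, ← Finset.mul_sum, hεa]
end

section
/- Let H be a finite-dimensional Hopf algebra over a field and let φ be a nonzero left integral on H (a functional with Σ a₍₁₎ φ(a₍₂₎) = φ(a)·1) such that the map a ↦ a·φ (where (a·φ)(b) = φ(ba)) is a linear bijection from H onto H*. Then there exists a unique element δ ∈ H such that (φ ⊗ id)(Δ(a)) = φ(a)·δ for all a ∈ H, and δ is grouplike: ε(δ) = 1 and Δ(δ) = δ ⊗ δ; moreover δ is invertible with δ⁻¹ = S(δ). -/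
open TensorProduct

set_option maxHeartbeats 1000000
set_option synthInstance.maxHeartbeats 400000
set_option linter.unusedSectionVars false

namespace Stmt8Aux

section Aux
variable {k H : Type*} [Field k] [Ring H] [HopfAlgebra k H] [FiniteDimensional k H]
variable (φ : H →ₗ[k] k)

open Coalgebra HopfAlgebra LinearMap

/-- elementwise form of `(id ⊗ f)∘Δ` -/
lemma repr_lTensor (f : H →ₗ[k] k) {x : H} {ι : Type*} (r : Repr k x ι) :
    (TensorProduct.rid k H) (LinearMap.lTensor H f (Coalgebra.comul x))
      = ∑ i ∈ r.index, f (r.right i) • r.left i := by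
  rw [← r.eq, map_sum, map_sum]
  simp [TensorProduct.smul_tmul]

/-- elementwise form of `(f ⊗ id)∘Δ` -/
lemma repr_rTensor (f : H →ₗ[k] k) {x : H} {ι : Type*} (r : Repr k x ι) :
    (TensorProduct.lid k H) (f.rTensor H (Coalgebra.comul x))
      = ∑ i ∈ r.index, f (r.left i) • r.right i := by
  rw [← r.eq, map_sum, map_sum]
  simp

lemma repr_counit_left {x : H} {ι : Type*} (r : Repr k x ι) :
    ∑ i ∈ r.index, Coalgebra.counit (R := k) (r.left i) • r.right i = x := by
  have := Coalgebra.sum_counit_tmul_eq (R := k) r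
  have h2 := congrArg (TensorProduct.lid k H) this
  rw [map_sum] at h2
  simpa using h2

lemma repr_counit_right {x : H} {ι : Type*} (r : Repr k x ι) :
    ∑ i ∈ r.index, Coalgebra.counit (R := k) (r.right i) • r.left i = x := by
  have := Coalgebra.sum_tmul_counit_eq (R := k) r
  have h2 := congrArg (TensorProduct.rid k H) this
  rw [map_sum] at h2
  simpa [TensorProduct.smul_tmul] using h2


lemma tensor_expand (t : H ⊗[k] H) :
    t = ∑ j : Fin (Module.finrank k H),
      ((TensorProduct.rid k H) (LinearMap.lTensor H ((Module.finBasis k H).coord j) t))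
        ⊗ₜ[k] (Module.finBasis k H) j := by
  set b := Module.finBasis k H
  induction t using TensorProduct.induction_on with
  | zero => simp
  | tmul x y =>
      simp only [LinearMap.lTensor_tmul, TensorProduct.rid_tmul]
      calc x ⊗ₜ[k] y = x ⊗ₜ[k] (∑ j, b.repr y j • b j) := by rw [b.sum_repr y]
      _ = ∑ j, (b.coord j y • x) ⊗ₜ[k] b j := by
          rw [TensorProduct.tmul_sum]
          exact Finset.sum_congr rfl fun j _ => by
            rw [TensorProduct.smul_tmul, Module.Basis.coord_apply]
  | add u v hu hv =>
      simp only [map_add]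
      simp only [TensorProduct.add_tmul, Finset.sum_add_distrib]
      rw [← hu, ← hv]

lemma tensor_eq_zero_of_forall (t : H ⊗[k] H)
    (h : ∀ f : H →ₗ[k] k, (TensorProduct.rid k H) (LinearMap.lTensor H f t) = 0) :
    t = 0 := by
  rw [tensor_expand t]
  simp [h]


lemma rinj (hbij : Function.Bijective fun a : H => φ ∘ₗ LinearMap.mulRight k a)
    (y : H) (h : ∀ c : H, φ (c * y) = 0) : y = 0 := by
  apply hbij.injective (a₂ := 0)
  ext c
  simpa using h c

lemma linj (hbij : Function.Bijective fun a : H => φ ∘ₗ LinearMap.mulRight k a)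
    (q : H) (h : ∀ x : H, φ (q * x) = 0) : q = 0 := by
  rw [← Module.forall_dual_apply_eq_zero_iff k q]
  intro f
  obtain ⟨a, ha⟩ := hbij.surjective f
  rw [← ha]
  simpa using h a

lemma lsurj (hbij : Function.Bijective fun a : H => φ ∘ₗ LinearMap.mulRight k a)
    (ψ : H →ₗ[k] k) : ∃ q : H, ∀ x, φ (q * x) = ψ x := by
  let Lm : H →ₗ[k] Module.Dual k H :=
    { toFun := fun q => φ ∘ₗ LinearMap.mulLeft k q
      map_add' := fun q q' => by ext x; simp [add_mul]
      map_smul' := fun c q => by ext x; simp [smul_mul_assoc]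
      }
  have hinj : Function.Injective Lm := by
    rw [injective_iff_map_eq_zero]
    intro q hq
    exact linj φ hbij q fun x => by simpa [Lm] using LinearMap.congr_fun hq x
  have hsurj : Function.Surjective Lm :=
    (LinearMap.injective_iff_surjective_of_finrank_eq_finrank
      (Subspace.dual_finrank_eq (V := H)).symm).mp hinj
  obtain ⟨q, hq⟩ := hsurj ψ
  exact ⟨q, fun x => by simpa [Lm] using LinearMap.congr_fun hq x⟩


/-- `hint` evaluated on a product with chosen representations. -/
lemma hint_prod
    (hint : ∀ a : H, (TensorProduct.rid k H) (LinearMap.lTensor H φ (Coalgebra.comul a))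
      = φ a • (1 : H))
    (u v : H) {ι κ : Type*} (ru : Repr k u ι) (rv : Repr k v κ) :
    ∑ m ∈ ru.index, ∑ i ∈ rv.index,
        φ (ru.right m * rv.right i) • (ru.left m * rv.left i) = φ (u * v) • (1 : H) := by
  have h := hint (u * v)
  have hc : Coalgebra.comul (R := k) (u * v)
      = ∑ m ∈ ru.index, ∑ i ∈ rv.index,
          (ru.left m * rv.left i) ⊗ₜ[k] (ru.right m * rv.right i) := by
    rw [Bialgebra.comul_mul, ← ru.eq, ← rv.eq, Finset.sum_mul_sum]
    simp [Algebra.TensorProduct.tmul_mul_tmul]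
  rw [hc] at h
  simpa [map_sum] using h


lemma star_id
    (hint : ∀ a : H, (TensorProduct.rid k H) (LinearMap.lTensor H φ (Coalgebra.comul a))
      = φ a • (1 : H))
    (q a : H) {ι κ : Type*} (rq : Repr k q ι) (ra : Repr k a κ) :
    ∑ i ∈ ra.index, φ (q * ra.right i) • ra.left i
      = ∑ j ∈ rq.index, φ (rq.right j * a) • antipode (R := k) (rq.left j) := by
  classical
  set S : H →ₗ[k] H := antipode (R := k) with hS
  -- the evaluation map
  let K : H ⊗[k] (H ⊗[k] H) →ₗ[k] H :=
    (TensorProduct.rid k H).toLinearMap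
      ∘ₗ LinearMap.lTensor H φ
      ∘ₗ LinearMap.mulRight k (Coalgebra.comul (R := k) a)
      ∘ₗ (LinearMap.mul' k H ∘ₗ S.rTensor H).rTensor H
      ∘ₗ (TensorProduct.assoc k H H H).symm.toLinearMap
  have hK : ∀ x y z : H, K (x ⊗ₜ[k] (y ⊗ₜ[k] z))
      = ∑ i ∈ ra.index, φ (z * ra.right i) • (S x * y * ra.left i) := by
    intro x y z
    show (TensorProduct.rid k H) (LinearMap.lTensor H φ
      ((((LinearMap.mul' k H ∘ₗ S.rTensor H).rTensor H)
        ((TensorProduct.assoc k H H H).symm (x ⊗ₜ[k] (y ⊗ₜ[k] z))) * Coalgebra.comul a))) = _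
    rw [TensorProduct.assoc_symm_tmul]
    simp only [LinearMap.rTensor_tmul, LinearMap.comp_apply, LinearMap.mul'_apply]
    rw [← ra.eq, Finset.mul_sum]
    simp only [Algebra.TensorProduct.tmul_mul_tmul, map_sum, LinearMap.lTensor_tmul,
      TensorProduct.rid_tmul, map_mul]
  -- coassociativity with chosen representations
  let t : (j : ι) → Repr k (rq.left j) (H × H) := fun j => Coalgebra.Repr.arbitrary k _
  let s : (j : ι) → Repr k (rq.right j) (H × H) := fun j => Coalgebra.Repr.arbitrary k _
  have coq := Coalgebra.sum_tmul_tmul_eq (R := k) rq t s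
  have key := congrArg K coq
  simp only [map_sum, hK] at key
  -- compute the left side of `key`
  have hleft : ∀ j ∈ rq.index,
      (∑ n ∈ (t j).index, ∑ i ∈ ra.index,
        φ (rq.right j * ra.right i) • (S ((t j).left n) * (t j).right n * ra.left i))
      = ∑ i ∈ ra.index,
          (Coalgebra.counit (R := k) (rq.left j) * φ (rq.right j * ra.right i)) • ra.left i := by
    intro j _
    rw [Finset.sum_comm]
    refine Finset.sum_congr rfl fun i _ => ?_
    have : ∑ n ∈ (t j).index, φ (rq.right j * ra.right i) • (S ((t j).left n) * (t j).right n * ra.left i)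
        = φ (rq.right j * ra.right i) • ((∑ n ∈ (t j).index, S ((t j).left n) * (t j).right n) * ra.left i) := by
      rw [Finset.sum_mul, Finset.smul_sum]
    rw [this, HopfAlgebra.sum_antipode_mul_eq_smul (t j), smul_mul_assoc, one_mul, smul_smul,
      mul_comm]
  -- compute the right side of `key`
  have hright : ∀ j ∈ rq.index,
      (∑ m ∈ (s j).index, ∑ i ∈ ra.index,
        φ ((s j).right m * ra.right i) • (S (rq.left j) * (s j).left m * ra.left i))
      = φ (rq.right j * a) • S (rq.left j) := by
    intro j _
    have : ∀ m ∈ (s j).index, ∀ i ∈ ra.index,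
        φ ((s j).right m * ra.right i) • (S (rq.left j) * (s j).left m * ra.left i)
        = S (rq.left j) * (φ ((s j).right m * ra.right i) • ((s j).left m * ra.left i)) := by
      intro m _ i _
      rw [mul_assoc, mul_smul_comm]
    calc ∑ m ∈ (s j).index, ∑ i ∈ ra.index,
          φ ((s j).right m * ra.right i) • (S (rq.left j) * (s j).left m * ra.left i)
        = S (rq.left j) * ∑ m ∈ (s j).index, ∑ i ∈ ra.index,
            φ ((s j).right m * ra.right i) • ((s j).left m * ra.left i) := by
          rw [Finset.mul_sum]
          exact Finset.sum_congr rfl fun m hm => by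
            rw [Finset.mul_sum]
            exact Finset.sum_congr rfl fun i hi => this m hm i hi
      _ = S (rq.left j) * (φ (rq.right j * a) • (1 : H)) := by
          rw [hint_prod φ hint (rq.right j) a (s j) ra]
      _ = φ (rq.right j * a) • S (rq.left j) := by rw [mul_smul_comm, mul_one]
  rw [Finset.sum_congr rfl hleft, Finset.sum_congr rfl hright] at key
  -- collapse the counit on the left side
  rw [Finset.sum_comm] at key
  have hfin : ∀ i ∈ ra.index,
      (∑ j ∈ rq.index, (Coalgebra.counit (R := k) (rq.left j) * φ (rq.right j * ra.right i)) • ra.left i)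
      = φ (q * ra.right i) • ra.left i := by
    intro i _
    rw [← Finset.sum_smul]
    congr 1
    have : ∑ j ∈ rq.index, Coalgebra.counit (R := k) (rq.left j) * φ (rq.right j * ra.right i)
        = φ ((∑ j ∈ rq.index, Coalgebra.counit (R := k) (rq.left j) • rq.right j) * ra.right i) := by
      rw [Finset.sum_mul, map_sum]
      exact Finset.sum_congr rfl fun j _ => by rw [smul_mul_assoc, map_smul, smul_eq_mul]
    rw [this, repr_counit_left rq]
  rw [Finset.sum_congr rfl hfin] at key
  exact key

lemma integral_unique
    (hint : ∀ a : H, (TensorProduct.rid k H) (LinearMap.lTensor H φ (Coalgebra.comul a))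
      = φ a • (1 : H))
    (hbij : Function.Bijective fun a : H => φ ∘ₗ LinearMap.mulRight k a)
    (ψ : H →ₗ[k] k)
    (hψ : ∀ a : H, (TensorProduct.rid k H) (LinearMap.lTensor H ψ (Coalgebra.comul a))
      = ψ a • (1 : H)) :
    ∃ μ : k, ψ = μ • φ := by
  classical
  set S : H →ₗ[k] H := antipode (R := k) with hS
  obtain ⟨q, hq⟩ := lsurj φ hbij ψ
  let rq : Repr k q (H × H) := Coalgebra.Repr.arbitrary k q
  -- step 1 : (S ⊗ id) (comul q) = 1 ⊗ q
  have heq : (TensorProduct.map S LinearMap.id) (Coalgebra.comul (R := k) q) = 1 ⊗ₜ[k] q := by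
    rw [← sub_eq_zero]
    apply tensor_eq_zero_of_forall
    intro f
    obtain ⟨a, ha⟩ := hbij.surjective f
    have hfa : ∀ x : H, f x = φ (x * a) := fun x => by rw [← ha]; rfl
    let ra : Repr k a (H × H) := Coalgebra.Repr.arbitrary k a
    simp only [map_sub]
    have h1 : (TensorProduct.rid k H) (LinearMap.lTensor H f
        ((TensorProduct.map S LinearMap.id) (Coalgebra.comul (R := k) q)))
        = ∑ j ∈ rq.index, φ (rq.right j * a) • S (rq.left j) := by
      rw [← rq.eq, map_sum, map_sum, map_sum]
      simp [hfa, TensorProduct.smul_tmul]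
    have h2 : (TensorProduct.rid k H) (LinearMap.lTensor H f ((1 : H) ⊗ₜ[k] q))
        = φ (q * a) • (1 : H) := by
      simp [hfa]
    rw [h1, h2, ← star_id φ hint q a rq ra, sub_eq_zero]
    have h3 := hψ a
    rw [repr_lTensor ψ ra] at h3
    calc ∑ i ∈ ra.index, φ (q * ra.right i) • ra.left i
        = ∑ i ∈ ra.index, ψ (ra.right i) • ra.left i :=
          Finset.sum_congr rfl fun i _ => by rw [hq]
      _ = ψ a • (1 : H) := h3
      _ = φ (q * a) • (1 : H) := by rw [hq]
  -- step 2 : comul q = 1 ⊗ q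
  have hco : Coalgebra.comul (R := k) q = 1 ⊗ₜ[k] q := by
    let ρ : H ⊗[k] H →ₗ[k] H ⊗[k] H :=
      (LinearMap.mul' k H).rTensor H
        ∘ₗ (TensorProduct.assoc k H H H).symm.toLinearMap
        ∘ₗ LinearMap.lTensor H (Coalgebra.comul (R := k))
    have hρ : ∀ x y : H, ρ (x ⊗ₜ[k] y)
        = ((LinearMap.mul' k H).rTensor H)
            ((TensorProduct.assoc k H H H).symm (x ⊗ₜ[k] Coalgebra.comul (R := k) y)) := by
      intro x y; rfl
    have hr1 : ρ ((1 : H) ⊗ₜ[k] q) = Coalgebra.comul (R := k) q := by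
      rw [hρ, ← rq.eq, TensorProduct.tmul_sum]
      simp only [map_sum, TensorProduct.assoc_symm_tmul, LinearMap.rTensor_tmul,
        LinearMap.mul'_apply, one_mul]
      try exact rq.eq
    have hr2 : ρ ((TensorProduct.map S LinearMap.id) (Coalgebra.comul (R := k) q))
        = 1 ⊗ₜ[k] q := by
      let t : (j : H × H) → Repr k (rq.left j) (H × H) := fun j => Coalgebra.Repr.arbitrary k _
      let s : (j : H × H) → Repr k (rq.right j) (H × H) := fun j => Coalgebra.Repr.arbitrary k _
      have coq := Coalgebra.sum_tmul_tmul_eq (R := k) rq t s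
      let g : H ⊗[k] (H ⊗[k] H) →ₗ[k] H ⊗[k] H :=
        (LinearMap.mul' k H ∘ₗ S.rTensor H).rTensor H
          ∘ₗ (TensorProduct.assoc k H H H).symm.toLinearMap
      have hg : ∀ x y z : H, g (x ⊗ₜ[k] (y ⊗ₜ[k] z)) = (S x * y) ⊗ₜ[k] z := by
        intro x y z
        show ((LinearMap.mul' k H ∘ₗ S.rTensor H).rTensor H)
          ((TensorProduct.assoc k H H H).symm (x ⊗ₜ[k] (y ⊗ₜ[k] z))) = _
        rw [TensorProduct.assoc_symm_tmul]
        simp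
      have key := congrArg g coq
      simp only [map_sum, hg] at key
      have hL : ∑ j ∈ rq.index, ∑ n ∈ (t j).index,
          (S ((t j).left n) * (t j).right n) ⊗ₜ[k] rq.right j = 1 ⊗ₜ[k] q := by
        have : ∀ j ∈ rq.index, ∑ n ∈ (t j).index,
            (S ((t j).left n) * (t j).right n) ⊗ₜ[k] rq.right j
            = Coalgebra.counit (R := k) (rq.left j) • ((1 : H) ⊗ₜ[k] rq.right j) := by
          intro j _
          rw [← TensorProduct.sum_tmul, HopfAlgebra.sum_antipode_mul_eq_smul (t j),
            TensorProduct.smul_tmul']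
        rw [Finset.sum_congr rfl this]
        have : ∑ j ∈ rq.index, Coalgebra.counit (R := k) (rq.left j) • ((1:H) ⊗ₜ[k] rq.right j)
            = (1 : H) ⊗ₜ[k] (∑ j ∈ rq.index, Coalgebra.counit (R := k) (rq.left j) • rq.right j) := by
          rw [TensorProduct.tmul_sum]
          exact Finset.sum_congr rfl fun j _ => (TensorProduct.tmul_smul _ _ _).symm
        rw [this, repr_counit_left rq]
      have hR : ρ ((TensorProduct.map S LinearMap.id) (Coalgebra.comul (R := k) q))
          = ∑ j ∈ rq.index, ∑ m ∈ (s j).index,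
              (S (rq.left j) * (s j).left m) ⊗ₜ[k] (s j).right m := by
        rw [← rq.eq, map_sum, map_sum]
        refine Finset.sum_congr rfl fun j _ => ?_
        simp only [TensorProduct.map_tmul, LinearMap.id_coe, id_eq]
        rw [hρ, ← (s j).eq, TensorProduct.tmul_sum, map_sum, map_sum]
        refine Finset.sum_congr rfl fun m _ => ?_
        rw [TensorProduct.assoc_symm_tmul]
        simp
      rw [hR, ← key, hL]
    rw [← hr2, heq, hr1]
  -- step 3 : q = counit q • 1
  have hq1 : q = Coalgebra.counit (R := k) q • (1 : H) := by
    have h3 := Coalgebra.lTensor_counit_comul (R := k) q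
    rw [hco] at h3
    have h4 := congrArg (TensorProduct.rid k H) h3
    simpa using h4.symm
  refine ⟨Coalgebra.counit (R := k) q, ?_⟩
  ext x
  rw [LinearMap.smul_apply, ← hq x]
  conv_lhs => rw [hq1]
  rw [smul_mul_assoc, one_mul, map_smul, smul_eq_mul]

/-- the convolution `x ↦ ∑ φ(x₁) φ(c x₂)` is again a left integral. -/
lemma omega_integral
    (hint : ∀ a : H, (TensorProduct.rid k H) (LinearMap.lTensor H φ (Coalgebra.comul a))
      = φ a • (1 : H))
    (c : H) (x : H) :
    (TensorProduct.rid k H) (LinearMap.lTensor H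
        (φ ∘ₗ LinearMap.mulLeft k c ∘ₗ
          ((TensorProduct.lid k H).toLinearMap ∘ₗ φ.rTensor H ∘ₗ
            (Coalgebra.comul (R := k) (A := H)))) (Coalgebra.comul x))
      = (φ ∘ₗ LinearMap.mulLeft k c ∘ₗ
          ((TensorProduct.lid k H).toLinearMap ∘ₗ φ.rTensor H ∘ₗ
            (Coalgebra.comul (R := k) (A := H)))) x • (1 : H) := by
  classical
  set ω : H →ₗ[k] k := φ ∘ₗ LinearMap.mulLeft k c ∘ₗ
      ((TensorProduct.lid k H).toLinearMap ∘ₗ φ.rTensor H ∘ₗ (Coalgebra.comul (R := k) (A := H)))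
    with hω
  have hωval : ∀ (y : H) (r : Repr k y (H × H)),
      ω y = ∑ m ∈ r.index, φ (r.left m) * φ (c * r.right m) := by
    intro y r
    have : ω y = φ (c * (TensorProduct.lid k H) (φ.rTensor H (Coalgebra.comul y))) := rfl
    rw [this, repr_rTensor φ r, Finset.mul_sum, map_sum]
    exact Finset.sum_congr rfl fun m _ => by rw [mul_smul_comm, map_smul, smul_eq_mul]
  let rx : Repr k x (H × H) := Coalgebra.Repr.arbitrary k x
  let t : (i : H × H) → Repr k (rx.left i) (H × H) := fun i => Coalgebra.Repr.arbitrary k _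
  let s : (i : H × H) → Repr k (rx.right i) (H × H) := fun i => Coalgebra.Repr.arbitrary k _
  -- the evaluation map
  let hc : H ⊗[k] H →ₗ[k] k :=
    (TensorProduct.lid k k).toLinearMap ∘ₗ TensorProduct.map φ (φ ∘ₗ LinearMap.mulLeft k c)
  let V : H ⊗[k] (H ⊗[k] H) →ₗ[k] H :=
    (TensorProduct.rid k H).toLinearMap ∘ₗ LinearMap.lTensor H hc
  have hV : ∀ u y z : H, V (u ⊗ₜ[k] (y ⊗ₜ[k] z)) = (φ y * φ (c * z)) • u := by
    intro u y z
    show (TensorProduct.rid k H) (u ⊗ₜ[k] (hc (y ⊗ₜ[k] z))) = _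
    have : hc (y ⊗ₜ[k] z) = φ y * φ (c * z) := by
      show (TensorProduct.lid k k) (φ y ⊗ₜ[k] (φ (c * z))) = _
      simp [smul_eq_mul]
    rw [this, TensorProduct.rid_tmul]
  have key := congrArg V (Coalgebra.sum_tmul_tmul_eq (R := k) rx t s)
  simp only [map_sum, hV] at key
  -- left side of key
  have hL : ∑ i ∈ rx.index, ∑ n ∈ (t i).index,
      (φ ((t i).right n) * φ (c * rx.right i)) • (t i).left n
      = (∑ i ∈ rx.index, φ (rx.left i) * φ (c * rx.right i)) • (1 : H) := by
    rw [Finset.sum_smul]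
    refine Finset.sum_congr rfl fun i _ => ?_
    have h1 : ∑ n ∈ (t i).index, (φ ((t i).right n) * φ (c * rx.right i)) • (t i).left n
        = φ (c * rx.right i) • ∑ n ∈ (t i).index, φ ((t i).right n) • (t i).left n := by
      rw [Finset.smul_sum]
      exact Finset.sum_congr rfl fun n _ => by rw [smul_smul, mul_comm]
    have h2 : ∑ n ∈ (t i).index, φ ((t i).right n) • (t i).left n = φ (rx.left i) • (1 : H) := by
      rw [← repr_lTensor φ (t i), hint]
    rw [h1, h2, smul_smul, mul_comm]
  rw [hL] at key
  rw [repr_lTensor ω rx, hωval x rx, key]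
  exact Finset.sum_congr rfl fun i _ => by rw [hωval (rx.right i) (s i), Finset.sum_smul]


end Aux

end Stmt8Aux

open Coalgebra in
/-- A finite-dimensional Hopf algebra with a nonzero left integral `φ` such that
`a ↦ a·φ` is bijective admits a unique modular (distinguished grouplike) element `δ`
with `(φ ⊗ id)(Δ a) = φ(a) δ`; moreover `δ` is grouplike and invertible with
`δ⁻¹ = S(δ)`. -/
theorem stmt_8 (k H : Type*) [Field k] [Ring H] [HopfAlgebra k H] [FiniteDimensional k H]
    (φ : H →ₗ[k] k) (hφ0 : φ ≠ 0)
    (hint : ∀ a : H,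
      (TensorProduct.rid k H) (LinearMap.lTensor H φ (Coalgebra.comul a)) = φ a • (1 : H))
    (hbij : Function.Bijective fun a : H => φ ∘ₗ LinearMap.mulRight k a) :
    ∃ δ : H,
      (∀ a : H, (TensorProduct.lid k H) (φ.rTensor H (Coalgebra.comul a)) = φ a • δ)
      ∧ Coalgebra.counit (R := k) δ = 1
      ∧ Coalgebra.comul (R := k) δ = δ ⊗ₜ[k] δ
      ∧ δ * HopfAlgebra.antipode (R := k) δ = 1
      ∧ HopfAlgebra.antipode (R := k) δ * δ = 1
      ∧ ∀ δ' : H,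
          (∀ a : H, (TensorProduct.lid k H) (φ.rTensor H (Coalgebra.comul a)) = φ a • δ')
          → δ' = δ := by
  classical
  obtain ⟨x₁, hx₁⟩ : ∃ x : H, φ x ≠ 0 := by
    by_contra h
    push_neg at h
    exact hφ0 (LinearMap.ext fun x => by simpa using h x)
  set T : H →ₗ[k] H := (TensorProduct.lid k H).toLinearMap ∘ₗ φ.rTensor H ∘ₗ
      (Coalgebra.comul (R := k) (A := H)) with hTdef
  have hT : ∀ a : H, (TensorProduct.lid k H) (φ.rTensor H (Coalgebra.comul a)) = T a :=
    fun a => rfl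
  set x₀ : H := (φ x₁)⁻¹ • x₁ with hx₀def
  have hφx₀ : φ x₀ = 1 := by
    rw [hx₀def, map_smul, smul_eq_mul, inv_mul_cancel₀ hx₁]
  set δ : H := T x₀ with hδdef
  -- the main property
  have hmain : ∀ x : H, T x = φ x • δ := by
    intro x
    have h0 : ∀ c : H, φ (c * (T x - φ x • δ)) = 0 := by
      intro c
      obtain ⟨μ, hμ⟩ := Stmt8Aux.integral_unique φ hint hbij _ (Stmt8Aux.omega_integral φ hint c)
      have hev : ∀ y : H, φ (c * T y) = μ * φ y := by
        intro y
        have h5 := LinearMap.congr_fun hμ y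
        rw [hTdef]
        simpa using h5
      have hμδ : μ = φ (c * δ) := by
        have h6 := hev x₀
        rw [hφx₀, mul_one] at h6
        rw [← h6, hδdef]
      rw [mul_sub, map_sub, mul_smul_comm, map_smul, smul_eq_mul, hev x, hμδ]
      ring
    exact sub_eq_zero.mp (Stmt8Aux.rinj φ hbij _ h0)
  -- counit of δ
  have hεδ : Coalgebra.counit (R := k) δ = 1 := by
    let rx : Repr k x₀ (H × H) := Coalgebra.Repr.arbitrary k x₀
    have hsum : ∑ i ∈ rx.index, φ (rx.left i) • rx.right i = δ := by
      rw [← Stmt8Aux.repr_rTensor φ rx, hT x₀, hδdef]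
    rw [← hsum, map_sum]
    have h7 : ∀ i ∈ rx.index, Coalgebra.counit (R := k) (φ (rx.left i) • rx.right i)
        = φ (Coalgebra.counit (R := k) (rx.right i) • rx.left i) := by
      intro i _
      rw [map_smul, map_smul, smul_eq_mul, smul_eq_mul, mul_comm]
    rw [Finset.sum_congr rfl h7, ← map_sum, Stmt8Aux.repr_counit_right rx, hφx₀]
  -- comul of δ
  have hcomulδ : Coalgebra.comul (R := k) δ = δ ⊗ₜ[k] δ := by
    let rx : Repr k x₀ (H × H) := Coalgebra.Repr.arbitrary k x₀
    have hsum : ∑ i ∈ rx.index, φ (rx.left i) • rx.right i = δ := by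
      rw [← Stmt8Aux.repr_rTensor φ rx, hT x₀, hδdef]
    let t : (i : H × H) → Repr k (rx.left i) (H × H) := fun i => Coalgebra.Repr.arbitrary k _
    let s : (i : H × H) → Repr k (rx.right i) (H × H) := fun i => Coalgebra.Repr.arbitrary k _
    let W : H ⊗[k] (H ⊗[k] H) →ₗ[k] H ⊗[k] H :=
      (TensorProduct.lid k (H ⊗[k] H)).toLinearMap ∘ₗ φ.rTensor (H ⊗[k] H)
    have hW : ∀ (u : H) (w : H ⊗[k] H), W (u ⊗ₜ[k] w) = φ u • w := by
      intro u w
      show (TensorProduct.lid k (H ⊗[k] H)) ((φ u) ⊗ₜ[k] w) = _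
      simp
    have key := congrArg W (Coalgebra.sum_tmul_tmul_eq (R := k) rx t s)
    simp only [map_sum, hW] at key
    have hR : ∑ i ∈ rx.index, ∑ m ∈ (s i).index,
        φ (rx.left i) • ((s i).left m ⊗ₜ[k] (s i).right m)
        = Coalgebra.comul (R := k) δ := by
      have h1 : ∀ i ∈ rx.index, ∑ m ∈ (s i).index,
          φ (rx.left i) • ((s i).left m ⊗ₜ[k] (s i).right m)
          = Coalgebra.comul (R := k) (φ (rx.left i) • rx.right i) := by
        intro i _
        rw [map_smul, ← (s i).eq, Finset.smul_sum]
      rw [Finset.sum_congr rfl h1, ← map_sum, hsum]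
    have hLft : ∑ i ∈ rx.index, ∑ n ∈ (t i).index,
        φ ((t i).left n) • ((t i).right n ⊗ₜ[k] rx.right i)
        = δ ⊗ₜ[k] δ := by
      have h1 : ∀ i ∈ rx.index, ∑ n ∈ (t i).index,
          φ ((t i).left n) • ((t i).right n ⊗ₜ[k] rx.right i)
          = φ (rx.left i) • (δ ⊗ₜ[k] rx.right i) := by
        intro i _
        have h2 : ∑ n ∈ (t i).index,
            φ ((t i).left n) • ((t i).right n ⊗ₜ[k] rx.right i)
            = (∑ n ∈ (t i).index, φ ((t i).left n) • (t i).right n) ⊗ₜ[k] rx.right i := by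
          rw [TensorProduct.sum_tmul]
          exact Finset.sum_congr rfl fun n _ => (TensorProduct.smul_tmul' _ _ _).symm
        have h3 : (∑ n ∈ (t i).index, φ ((t i).left n) • (t i).right n)
            = φ (rx.left i) • δ := by
          rw [← Stmt8Aux.repr_rTensor φ (t i), hT, hmain]
        rw [h2, h3, TensorProduct.smul_tmul']
      rw [Finset.sum_congr rfl h1]
      have h4 : ∑ i ∈ rx.index, φ (rx.left i) • (δ ⊗ₜ[k] rx.right i)
          = δ ⊗ₜ[k] (∑ i ∈ rx.index, φ (rx.left i) • rx.right i) := by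
        rw [TensorProduct.tmul_sum]
        exact Finset.sum_congr rfl fun i _ => (TensorProduct.tmul_smul _ _ _).symm
      rw [h4, hsum]
    rw [← hR, ← key, hLft]
  -- antipode facts
  have hS1 : HopfAlgebra.antipode (R := k) δ * δ = 1 := by
    have h4 := HopfAlgebra.mul_antipode_rTensor_comul_apply (R := k) (a := δ)
    rw [hcomulδ, LinearMap.rTensor_tmul, LinearMap.mul'_apply, hεδ, map_one] at h4
    exact h4
  have hS2 : δ * HopfAlgebra.antipode (R := k) δ = 1 := by
    have h4 := HopfAlgebra.mul_antipode_lTensor_comul_apply (R := k) (a := δ)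
    rw [hcomulδ, LinearMap.lTensor_tmul, LinearMap.mul'_apply, hεδ, map_one] at h4
    exact h4
  refine ⟨δ, fun a => (hT a).trans (hmain a), hεδ, hcomulδ, hS2, hS1, fun δ' h' => ?_⟩
  have h8 := h' x₀
  rw [hT x₀, hφx₀, one_smul] at h8
  rw [← h8, hδdef]
end

section
/- Let H be a finite-dimensional Hopf algebra with a left integral φ on H such that the map H → H*, a ↦ a·φ (where (a·φ)(b) = φ(ba)) is bijective. Give H* the dual Hopf algebra structure. Then the functional ψ̂ : H* → k defined by ψ̂(a·φ) := ε(a) is a right integral on the dual Hopf algebra H*, i.e. (ψ̂ ⊗ id)(Δ_{H*}(ω)) = ψ̂(ω)·1_{H*} for all ω ∈ H*. -/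
open TensorProduct

/-- For a finite-dimensional Hopf algebra `H` with a left integral `φ` such that
`a ↦ a·φ` is bijective, the functional `ψ̂` on the dual Hopf algebra `H*` defined by
`ψ̂(a·φ) = ε(a)` is a right integral on `H*`; here the comultiplication of `H*` is
dual to the multiplication of `H` and the unit of `H*` is `ε`. -/
theorem stmt_9 (k H : Type*) [Field k] [Ring H] [HopfAlgebra k H] [FiniteDimensional k H]
    (φ : H →ₗ[k] k)
    (hint : ∀ a : H,
      (TensorProduct.rid k H) (LinearMap.lTensor H φ (Coalgebra.comul a)) = φ a • (1 : H))
    (hbij : Function.Bijective fun a : H => φ ∘ₗ LinearMap.mulRight k a)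
    (ψhat : Module.Dual k (Module.Dual k H))
    (hψhat : ∀ a : H, ψhat (φ ∘ₗ LinearMap.mulRight k a) = Coalgebra.counit (R := k) a) :
    ∀ ω : Module.Dual k H,
      (TensorProduct.lid k (Module.Dual k H))
        (ψhat.rTensor (Module.Dual k H)
          ((TensorProduct.dualDistribEquiv k H H).symm (ω ∘ₗ LinearMap.mul' k H)))
      = ψhat ω • (Coalgebra.counit (R := k) : H →ₗ[k] k) := by
  intro ω
  obtain ⟨a, ha⟩ := hbij.2 ω
  set t := (TensorProduct.dualDistribEquiv k H H).symm (ω ∘ₗ LinearMap.mul' k H) with ht_def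
  have ht : TensorProduct.dualDistrib k H H t = ω ∘ₗ LinearMap.mul' k H := by
    have h := (TensorProduct.dualDistribEquiv k H H).apply_symm_apply (ω ∘ₗ LinearMap.mul' k H)
    rw [← ht_def] at h
    simpa [TensorProduct.dualDistribEquiv, TensorProduct.dualDistribEquivOfBasis,
      LinearEquiv.ofLinear_apply] using h
  ext b
  -- key computation for arbitrary tensors
  have key : ∀ s : Module.Dual k H ⊗[k] Module.Dual k H,
      (TensorProduct.lid k (Module.Dual k H)) (ψhat.rTensor (Module.Dual k H) s) b
        = ψhat ((TensorProduct.dualDistrib k H H s) ∘ₗ ((TensorProduct.mk k H H).flip b)) := by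
    intro s
    induction s using TensorProduct.induction_on with
    | zero => simp
    | tmul f g =>
        have hcomp : (TensorProduct.dualDistrib k H H (f ⊗ₜ g)) ∘ₗ
            ((TensorProduct.mk k H H).flip b) = g b • f := by
          ext x
          simp [TensorProduct.dualDistrib_apply, mul_comm]
        simp [hcomp, mul_comm]
    | add x y hx hy =>
        simp only [map_add, LinearMap.add_comp, map_add, hx, hy, LinearMap.add_apply]
  rw [key t, ht]
  have h1 : (ω ∘ₗ LinearMap.mul' k H) ∘ₗ ((TensorProduct.mk k H H).flip b)
      = ω ∘ₗ LinearMap.mulRight k b := by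
    ext x
    simp [LinearMap.mul'_apply]
  rw [h1, ← ha]
  have h2 : (φ ∘ₗ LinearMap.mulRight k a) ∘ₗ LinearMap.mulRight k b
      = φ ∘ₗ LinearMap.mulRight k (b * a) := by
    ext x
    simp [mul_assoc]
  rw [h2, hψhat]
  simp only [LinearMap.smul_apply, smul_eq_mul, hψhat]
  rw [Bialgebra.counit_mul, mul_comm]
end
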